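/- Let R be a commutative ring, n a positive integer, and p ∈ R[X] a monic polynomial of degree n. Then the intersection, over all matrices M ∈ Mₙ(R) whose characteristic polynomial equals p, of the null ideals N_{R[X]}(M) = {g ∈ R[X] : g(M) = 0} is exactly the principal ideal of R[X] generated by p. -/

import Mathlib

open Polynomial

/-- For a commutative ring `R`, a positive integer `n` and a monic polynomial
`p ∈ R[X]` of degree `n`, the intersection over all matrices `M ∈ Mₙ(R)` with characteristic
polynomial `p` of the null ideals `N_{R[X]}(M) = ker (g ↦ g(M))` equals the principal ideal `(p)`. -/
theorem nullIdeal_inter_eq_span (R : Type*) [CommRing R] (n : ℕ) (hn : 0 < n)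
    (p : R[X]) (hp : p.Monic) (hdeg : p.natDegree = n) :
    (⨅ M ∈ {M : Matrix (Fin n) (Fin n) R | M.charpoly = p},
      RingHom.ker ((Polynomial.aeval M : R[X] →ₐ[R] Matrix (Fin n) (Fin n) R) :
        R[X] →+* Matrix (Fin n) (Fin n) R)) = Ideal.span {p} := by
  cases subsingleton_or_nontrivial R
  · exact Subsingleton.elim _ _
  -- Setup: the companion-matrix model via `AdjoinRoot p`.
  set S := AdjoinRoot p with hS
  let pb := AdjoinRoot.powerBasis' hp
  have hdim : pb.dim = n := by rw [AdjoinRoot.powerBasis'_dim, hdeg]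
  let b : Module.Basis (Fin n) R S := pb.basis.reindex (finCongr hdim)
  haveI : Module.Free R S := Module.Free.of_basis b
  haveI : Module.Finite R S := Module.Finite.of_basis b
  let e : Module.End R S ≃ₐ[R] Matrix (Fin n) (Fin n) R := LinearMap.toMatrixAlgEquiv b
  let f : Module.End R S := Algebra.lmul R S (AdjoinRoot.root p)
  let M : Matrix (Fin n) (Fin n) R := e f
  have lmul_inj : Function.Injective (Algebra.lmul R S) := by
    intro x y hxy
    have := congrArg (fun (g : Module.End R S) => g 1) hxy
    simpa using this
  -- key: evaluating any polynomial at `M`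
  have key : ∀ g : R[X], aeval M g = e (Algebra.lmul R S (aeval (AdjoinRoot.root p) g)) := by
    intro g
    have h1 : aeval M g = e (aeval f g) := by
      rw [aeval_algEquiv]; rfl
    have h2 : aeval f g = Algebra.lmul R S (aeval (AdjoinRoot.root p) g) :=
      aeval_algHom_apply (Algebra.lmul R S) (AdjoinRoot.root p) g
    rw [h1, h2]
  have key0 : ∀ g : R[X], aeval M g = 0 ↔ p ∣ g := by
    intro g
    rw [key g]
    constructor
    · intro h
      have h' : Algebra.lmul R S (aeval (AdjoinRoot.root p) g) = 0 := by
        apply e.injective; simpa using h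
      have : aeval (AdjoinRoot.root p) g = 0 := lmul_inj (by simpa using h')
      rwa [AdjoinRoot.aeval_eq, AdjoinRoot.mk_eq_zero] at this
    · intro h
      have : aeval (AdjoinRoot.root p) g = 0 := by
        rw [AdjoinRoot.aeval_eq, AdjoinRoot.mk_eq_zero]; exact h
      rw [this]; simp
  -- charpoly of M is p
  have hMe : M = LinearMap.toMatrix b b f := rfl
  have hMcp : M.charpoly = f.charpoly := by rw [hMe, LinearMap.charpoly_toMatrix]
  have hfin : Module.finrank R S = n := by
    rw [Module.finrank_eq_card_basis b, Fintype.card_fin]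
  have hqdeg : f.charpoly.natDegree = n := by
    rw [LinearMap.charpoly_natDegree, hfin]
  have hdvd : p ∣ f.charpoly := by
    rw [← key0]
    rw [key, ← aeval_algHom_apply]
    show e (aeval f f.charpoly) = 0
    rw [LinearMap.aeval_self_charpoly]; simp
  have hcp : M.charpoly = p := by
    rw [hMcp]
    obtain ⟨c, hc⟩ := hdvd
    have hq0 : f.charpoly ≠ 0 := (LinearMap.charpoly_monic f).ne_zero
    have hc0 : c ≠ 0 := by rintro rfl; rw [mul_zero] at hc; exact hq0 hc
    have hnd : c.natDegree = 0 := by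
      have := hp.natDegree_mul' hc0
      rw [← hc, hqdeg, hdeg] at this
      omega
    have hcC : c = C (c.coeff 0) := (Polynomial.eq_C_of_natDegree_eq_zero hnd)
    have hlc : c.coeff 0 = 1 := by
      have h1 : f.charpoly.coeff n = 1 := by
        have := (LinearMap.charpoly_monic f).leadingCoeff
        rwa [Polynomial.leadingCoeff, hqdeg] at this
      rw [hc, hcC, Polynomial.coeff_mul_C] at h1
      have hpn : p.coeff n = 1 := by
        have := hp.leadingCoeff
        rwa [Polynomial.leadingCoeff, hdeg] at this
      rwa [hpn, one_mul] at h1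
    rw [hc, hcC, hlc, map_one, mul_one]
  -- conclude
  apply le_antisymm
  · refine le_trans (iInf₂_le M hcp) ?_
    intro g hg
    rw [RingHom.mem_ker] at hg
    rw [Ideal.mem_span_singleton]
    exact (key0 g).mp hg
  · rw [le_iInf₂_iff]
    intro N hN
    rw [Ideal.span_le, Set.singleton_subset_iff]
    show p ∈ RingHom.ker _
    rw [RingHom.mem_ker]
    show aeval N p = 0
    rw [← hN]
    exact Matrix.aeval_self_charpoly N
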